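/- Let Π be a positive CNF theory, M a model of Π, and S the steady set of M for Π (the unique minimal model of the Horn theory Π^{nd}_{M←}). Then every model of Π contained in M contains S. -/
import Mathlib


structure Clause where
  head : Finset ℕ
  body : Finset ℕ
deriving DecidableEq

abbrev Theory := Finset Clause

/-- interpretation I satisfies clause c -/
def satC (I : Finset ℕ) (c : Clause) : Prop :=
  (c.head ∩ I).Nonempty ∨ ¬ c.body ⊆ I

def isModel (T : Theory) (I : Finset ℕ) : Prop := ∀ c ∈ T, satC I c

def isMinModel (T : Theory) (I : Finset ℕ) : Prop :=
  isModel T I ∧ ∀ J ⊂ I, ¬ isModel T J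

def Positive (T : Theory) : Prop := ∀ c ∈ T, c.head.Nonempty

def Horn (T : Theory) : Prop := ∀ c ∈ T, c.head.card = 1

/-- atoms occurring in a theory -/
def atoms (T : Theory) : Finset ℕ := T.biUnion (fun c => c.head ∪ c.body)

/-- c_{X←} : project head on X -/
def projHeadC (c : Clause) (X : Finset ℕ) : Clause := ⟨c.head ∩ X, c.body⟩
/-- c_X : project head and body on X -/
def projC (c : Clause) (X : Finset ℕ) : Clause := ⟨c.head ∩ X, c.body ∩ X⟩

/-- Π_{X←} -/
def projHeadT (T : Theory) (X : Finset ℕ) : Theory :=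
  (T.image (fun c => projHeadC c X)).filter (fun c => c.head.Nonempty)

/-- Π_X -/
def projT (T : Theory) (X : Finset ℕ) : Theory :=
  (T.image (fun c => projC c X)).filter (fun c => c.head.Nonempty)

/-- Π^{nd} : single-head fragment -/
def nd (T : Theory) : Theory := T.filter (fun c => c.head.card = 1)

/-- the steady set of M for Π is the minimal model of Π^{nd}_{M←} -/
def isSteady (T : Theory) (M S : Finset ℕ) : Prop :=
  isMinModel (nd (projHeadT T M)) S

def simpl (T : Theory) (M S : Finset ℕ) : Theory :=
  T.filter (fun c => c.head ∩ S = ∅ ∧ c.body ⊆ M)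

/-- simplified theory of Π w.r.t. M (with steady set S) -/
def simplT (T : Theory) (M S : Finset ℕ) : Theory := projT (simpl T M S) (M \ S)

/-- E erasable in M for T -/
def Erasable (T : Theory) (M E : Finset ℕ) : Prop :=
  E.Nonempty ∧ E ⊆ M ∧ isModel T (M \ E)

def Outbound (T : Theory) (Y Z : Finset ℕ) : Prop :=
  ∃ c ∈ T, (c.head ∩ Z).Nonempty ∧ (c.body ∩ (Y \ Z)).Nonempty ∧
    c.body ∩ Z = ∅ ∧ c.head ∩ (Y \ Z) = ∅

def Elementary (T : Theory) (Y : Finset ℕ) : Prop :=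
  Y.Nonempty ∧ Y ⊆ atoms T ∧ ∀ Z, Z ⊂ Y → Z.Nonempty → Outbound T Y Z

def HEF (T : Theory) : Prop :=
  ∀ c ∈ T, ∀ E, Elementary T E → (E ∩ c.head).card ≤ 1

def DisjunctiveSet (T : Theory) (S : Finset ℕ) : Prop :=
  ∃ c ∈ T, 1 < (c.head ∩ S).card

def SuperElementary (T : Theory) (X : Finset ℕ) : Prop :=
  Elementary T X ∧ ¬ Outbound T (atoms T) X

def posForm (T : Theory) (phi : ℕ) : Theory :=
  T.filter (fun c => c.head.Nonempty) ∪
  (T.filter (fun c => c.head = ∅)).image (fun c => ⟨{phi}, c.body⟩) ∪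
  (atoms T).image (fun a => ⟨{a}, {phi}⟩)

theorem stmt2 (T : Theory) (M S : Finset ℕ) (hPos : Positive T) (hM : isModel T M)
    (hS : isSteady T M S) (hSM : S ⊆ M) :
    ∀ N ⊆ M, isModel T N → S ⊆ N := by
  intro N hNM hN
  -- S ∩ N is a model of the Horn theory
  have hmod : isModel (nd (projHeadT T M)) (S ∩ N) := by
    intro c' hc'
    simp only [nd, Finset.mem_filter] at hc'
    obtain ⟨hc'p, hcard⟩ := hc'
    have hcS := hS.1 _ (by simp [nd, Finset.mem_filter]; exact ⟨hc'p, hcard⟩)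
    -- satC N c'
    simp only [projHeadT, Finset.mem_filter, Finset.mem_image] at hc'p
    obtain ⟨⟨c, hcT, hceq⟩, hhne⟩ := hc'p
    have hcN : satC N c' := by
      rcases hN c hcT with h | h
      · left
        obtain ⟨a, ha⟩ := h
        simp only [Finset.mem_inter] at ha
        refine ⟨a, ?_⟩
        subst hceq
        simp only [projHeadC, Finset.mem_inter]
        exact ⟨⟨ha.1, hNM ha.2⟩, ha.2⟩
      · right; subst hceq; exact h
    -- combine
    by_cases hb : c'.body ⊆ S ∩ N
    · left
      obtain ⟨a, ha⟩ := Finset.card_eq_one.mp hcard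
      have h1 : (c'.head ∩ S).Nonempty := by
        rcases hcS with h | h
        · exact h
        · exact absurd (hb.trans Finset.inter_subset_left) h
      have h2 : (c'.head ∩ N).Nonempty := by
        rcases hcN with h | h
        · exact h
        · exact absurd (hb.trans Finset.inter_subset_right) h
      obtain ⟨x, hx⟩ := h1
      obtain ⟨y, hy⟩ := h2
      simp only [ha, Finset.mem_inter, Finset.mem_singleton] at hx hy
      refine ⟨a, ?_⟩
      simp only [ha, Finset.mem_inter, Finset.mem_singleton]
      exact ⟨trivial, hx.1 ▸ hx.2, hy.1 ▸ hy.2⟩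
    · right; exact hb
  have hsub : S ∩ N ⊆ S := Finset.inter_subset_left
  by_contra hns
  have hss : S ∩ N ⊂ S := by
    refine ⟨hsub, fun h => hns ?_⟩
    intro a haS
    exact (Finset.mem_inter.mp (h haS)).2
  exact hS.2 _ hss hmod
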